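/- arXiv:2505.22399 — 3 statements merged into one kernel-verified Lean document; each statement's English description precedes it below -/
import Mathlib

section
/- Let J be a real n×n matrix whose symmetric part is negative definite, with e1 = -λ_max(J) > 0 and e2 = -λ_min(J) > 0 defined via the eigenvalues of its symmetric part. Suppose P is a symmetric positive definite matrix satisfying the Lyapunov equation P J + Jᵀ P = -I. Then for all vectors x, (1/(2 e2)) ‖x‖² ≤ xᵀ P x ≤ (1/(2 e1)) ‖x‖². -/
open Matrix

/-- Lyapunov matrix quadratic form sandwich bounds.
The eigenvalue bounds on the symmetric part of `J` are encoded via the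
Rayleigh quotient: `-e2 * ‖x‖² ≤ xᵀ J x ≤ -e1 * ‖x‖²`. -/
theorem stmt0 {n : ℕ} (J P : Matrix (Fin n) (Fin n) ℝ) (e1 e2 : ℝ)
    (he1 : 0 < e1) (he2 : 0 < e2)
    (hmax : ∀ x : EuclideanSpace ℝ (Fin n), x ⬝ᵥ J.mulVec x ≤ -e1 * ‖x‖ ^ 2)
    (hmin : ∀ x : EuclideanSpace ℝ (Fin n), -e2 * ‖x‖ ^ 2 ≤ x ⬝ᵥ J.mulVec x)
    (hPsymm : P.IsSymm) (hPposdef : P.PosDef)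
    (hLyap : P * J + Jᵀ * P = -1) :
    ∀ x : EuclideanSpace ℝ (Fin n),
      (1 / (2 * e2)) * ‖x‖ ^ 2 ≤ x ⬝ᵥ P.mulVec x ∧
        x ⬝ᵥ P.mulVec x ≤ (1 / (2 * e1)) * ‖x‖ ^ 2 := by
  have hH : P.IsHermitian := hPposdef.isHermitian
  set b := hH.eigenvectorBasis with hb
  set μ := hH.eigenvalues with hμ
  have hinner : ∀ x y : EuclideanSpace ℝ (Fin n), (inner ℝ x y : ℝ) = x ⬝ᵥ y := by
    intro x y
    simp [PiLp.inner_apply, dotProduct, mul_comm]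
  have hPv : ∀ (v w : Fin n → ℝ), v ⬝ᵥ P.mulVec w = (P.mulVec v) ⬝ᵥ w := by
    intro v w
    rw [Matrix.dotProduct_mulVec, ← Matrix.vecMul_transpose, hPsymm.eq]
  have hμpos : ∀ i, 0 < μ i := fun i => hPposdef.eigenvalues_pos i
  have hunit : ∀ i, ‖(b i : EuclideanSpace ℝ (Fin n))‖ = 1 := fun i => b.orthonormal.1 i
  have hdotself : ∀ i, (b i : Fin n → ℝ) ⬝ᵥ (b i : Fin n → ℝ) = 1 := by
    intro i
    have := hinner (b i) (b i)
    rw [real_inner_self_eq_norm_sq, hunit i] at this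
    simpa using this.symm
  have key : ∀ i, 2 * μ i * ((b i : Fin n → ℝ) ⬝ᵥ J.mulVec (b i)) = -1 := by
    intro i
    have hv : P.mulVec (b i) = μ i • ((b i : Fin n → ℝ)) := hH.mulVec_eigenvectorBasis i
    have h1 := congrArg (fun M : Matrix (Fin n) (Fin n) ℝ =>
      (b i : Fin n → ℝ) ⬝ᵥ M.mulVec (b i)) hLyap
    simp only [Matrix.add_mulVec, dotProduct_add, Matrix.neg_mulVec,
      Matrix.one_mulVec, dotProduct_neg, hdotself i,
      ← Matrix.mulVec_mulVec] at h1
    rw [hPv] at h1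
    rw [hv, Matrix.mulVec_smul, smul_dotProduct, dotProduct_smul] at h1
    have h2 : (b i : Fin n → ℝ) ⬝ᵥ Jᵀ.mulVec (b i) = (b i : Fin n → ℝ) ⬝ᵥ J.mulVec (b i) := by
      rw [Matrix.dotProduct_mulVec, Matrix.vecMul_transpose, dotProduct_comm]
    rw [h2] at h1
    simp only [smul_eq_mul] at h1
    linarith
  have hqmax : ∀ i, (b i : Fin n → ℝ) ⬝ᵥ J.mulVec (b i) ≤ -e1 := by
    intro i
    have := hmax (b i)
    rwa [hunit i, one_pow, mul_one] at this
  have hqmin : ∀ i, -e2 ≤ (b i : Fin n → ℝ) ⬝ᵥ J.mulVec (b i) := by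
    intro i
    have := hmin (b i)
    rwa [hunit i, one_pow, mul_one] at this
  have hμub : ∀ i, μ i ≤ 1 / (2 * e1) := by
    intro i
    have h := key i
    have h2 := hqmax i
    have h3 := hμpos i
    rw [le_div_iff₀ (by positivity)]
    nlinarith [mul_le_mul_of_nonneg_left h2 h3.le]
  have hμlb : ∀ i, 1 / (2 * e2) ≤ μ i := by
    intro i
    have h := key i
    have h2 := hqmin i
    have h3 := hμpos i
    rw [div_le_iff₀ (by positivity)]
    nlinarith [mul_le_mul_of_nonneg_left h2 h3.le]
  intro x
  set c : Fin n → ℝ := fun i => (inner ℝ x (b i : EuclideanSpace ℝ (Fin n)) : ℝ) with hc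
  have hbx : ∀ i, (inner ℝ (b i : EuclideanSpace ℝ (Fin n)) x : ℝ) = c i :=
    fun i => real_inner_comm _ _
  have hnormsq : ‖x‖ ^ 2 = ∑ i, (c i) ^ 2 := by
    have := b.sum_inner_mul_inner x x
    rw [real_inner_self_eq_norm_sq] at this
    rw [← this]
    refine Finset.sum_congr rfl fun i _ => ?_
    rw [hbx i, sq]
  have hquad : x ⬝ᵥ P.mulVec x = ∑ i, μ i * (c i) ^ 2 := by
    have hy := b.sum_inner_mul_inner x (WithLp.toLp 2 (P.mulVec x) : EuclideanSpace ℝ (Fin n))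
    rw [hinner x _] at hy
    rw [← hy]
    refine Finset.sum_congr rfl fun i _ => ?_
    have h5 : (inner ℝ (b i : EuclideanSpace ℝ (Fin n))
        (WithLp.toLp 2 (P.mulVec x) : EuclideanSpace ℝ (Fin n)) : ℝ) = μ i * c i := by
      rw [hinner, hPv]
      have hv : P.mulVec (b i) = μ i • ((b i : Fin n → ℝ)) := hH.mulVec_eigenvectorBasis i
      rw [hv, smul_dotProduct, smul_eq_mul]
      congr 1
    rw [h5]
    ring
  rw [hquad, hnormsq, Finset.mul_sum, Finset.mul_sum]
  constructor
  · refine Finset.sum_le_sum fun i _ => ?_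
    nlinarith [hμlb i, sq_nonneg (c i)]
  · refine Finset.sum_le_sum fun i _ => ?_
    nlinarith [hμub i, sq_nonneg (c i)]
end

section
/- Let J be a real n×n matrix such that J + Jᵀ is negative definite. Then the integral P = ∫₀^∞ exp(Jᵀ t) exp(J t) dt converges and satisfies the Lyapunov equation P J + Jᵀ P = -I. -/
open Matrix MeasureTheory

namespace LyapunovAux

attribute [local instance] Matrix.linftyOpNormedAddCommGroup Matrix.linftyOpNormedSpace
  Matrix.linftyOpNormedRing Matrix.linftyOpNormedAlgebra

variable {n : ℕ}

open scoped RealInnerProductSpace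

/-- evaluation of an entry as a continuous linear map -/
noncomputable def entryCLM (i j : Fin n) : Matrix (Fin n) (Fin n) ℝ →L[ℝ] ℝ :=
  LinearMap.toContinuousLinearMap
    { toFun := fun M => M i j
      map_add' := fun _ _ => rfl
      map_smul' := fun _ _ => rfl }

@[simp] lemma entryCLM_apply (i j : Fin n) (M : Matrix (Fin n) (Fin n) ℝ) :
    entryCLM i j M = M i j := by
  rw [entryCLM, LinearMap.coe_toContinuousLinearMap']
  rfl

/-- `M ↦ M.mulVec x` as a continuous linear map into Euclidean space -/
noncomputable def mvLM (x : Fin n → ℝ) : Matrix (Fin n) (Fin n) ℝ →ₗ[ℝ] (Fin n → ℝ) where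
  toFun := fun M => M.mulVec x
  map_add' := fun A B => Matrix.add_mulVec A B x
  map_smul' := fun c A => Matrix.smul_mulVec c A x

noncomputable def mvCLM (x : Fin n → ℝ) :
    Matrix (Fin n) (Fin n) ℝ →L[ℝ] EuclideanSpace ℝ (Fin n) :=
  LinearMap.toContinuousLinearMap
    ((WithLp.linearEquiv 2 ℝ (Fin n → ℝ)).symm.toLinearMap ∘ₗ mvLM x)

@[simp] lemma mvCLM_apply (x : Fin n → ℝ) (M : Matrix (Fin n) (Fin n) ℝ) (k : Fin n) :
    mvCLM x M k = M.mulVec x k := by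
  rw [mvCLM, LinearMap.coe_toContinuousLinearMap']
  rfl

noncomputable def E (J : Matrix (Fin n) (Fin n) ℝ) (t : ℝ) : Matrix (Fin n) (Fin n) ℝ :=
  NormedSpace.exp (t • J)

lemma hasDerivAt_E (J : Matrix (Fin n) (Fin n) ℝ) (t : ℝ) :
    HasDerivAt (E J) (J * E J t) t :=
  hasDerivAt_exp_smul_const' J t

lemma E_zero (J : Matrix (Fin n) (Fin n) ℝ) : E J 0 = 1 := by
  simp [E, NormedSpace.exp_zero]

lemma inner_eq_dot (v w : EuclideanSpace ℝ (Fin n)) :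
    ⟪v, w⟫ = (v : Fin n → ℝ) ⬝ᵥ (w : Fin n → ℝ) := by
  simp [PiLp.inner_apply, dotProduct, RCLike.inner_apply, mul_comm]

lemma dot_scale (M : Matrix (Fin n) (Fin n) ℝ) (a : ℝ) (w : Fin n → ℝ) :
    (a • w) ⬝ᵥ (M.mulVec (a • w)) = a ^ 2 * (w ⬝ᵥ M.mulVec w) := by
  rw [Matrix.mulVec_smul, smul_dotProduct, dotProduct_smul]
  simp [smul_eq_mul]; ring

/-- uniform negativity constant -/
lemma exists_c (J : Matrix (Fin n) (Fin n) ℝ) (hn : 0 < n)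
    (hneg : ∀ x : EuclideanSpace ℝ (Fin n), x ≠ 0 → x ⬝ᵥ (J + Jᵀ).mulVec x < 0) :
    ∃ c : ℝ, 0 < c ∧ ∀ v : EuclideanSpace ℝ (Fin n),
      v ⬝ᵥ (J + Jᵀ).mulVec v ≤ -c * ‖v‖ ^ 2 := by
  haveI : Nonempty (Fin n) := ⟨⟨0, hn⟩⟩
  set q : EuclideanSpace ℝ (Fin n) → ℝ := fun v => v ⬝ᵥ (J + Jᵀ).mulVec v with hq
  have hqc : Continuous q := by
    simp only [hq, dotProduct, Matrix.mulVec]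
    exact continuous_finset_sum _ fun i _ =>
      ((continuous_apply i).comp (PiLp.continuous_ofLp 2 _)).mul (continuous_finset_sum _ fun j _ =>
        continuous_const.mul ((continuous_apply j).comp (PiLp.continuous_ofLp 2 _)))
  have hsne : (Metric.sphere (0 : EuclideanSpace ℝ (Fin n)) 1).Nonempty := by
    haveI : Nontrivial (EuclideanSpace ℝ (Fin n)) := by
      refine ⟨EuclideanSpace.single ⟨0, hn⟩ 1, 0, ?_⟩
      intro h
      have := congrArg (fun v : EuclideanSpace ℝ (Fin n) => v ⟨0, hn⟩) h
      simp at this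
    exact NormedSpace.sphere_nonempty.2 zero_le_one
  obtain ⟨v0, hv0, hmax⟩ :=
    (isCompact_sphere (0 : EuclideanSpace ℝ (Fin n)) 1).exists_isMaxOn hsne hqc.continuousOn
  have hv0ne : v0 ≠ 0 := by
    intro h; rw [h] at hv0; simp at hv0
  refine ⟨-q v0, neg_pos.mpr (hneg v0 hv0ne), ?_⟩
  intro v
  by_cases hv : v = 0
  · subst hv; simp [hq]
  · have hvn : ‖v‖ ≠ 0 := norm_ne_zero_iff.2 hv
    have hmem : (‖v‖⁻¹ • v) ∈ Metric.sphere (0 : EuclideanSpace ℝ (Fin n)) 1 := by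
      simp [norm_smul, abs_of_nonneg (inv_nonneg.2 (norm_nonneg v)), inv_mul_cancel₀ hvn]
    have hle : q (‖v‖⁻¹ • v) ≤ q v0 := hmax hmem
    have hscale : q (‖v‖⁻¹ • v) = (‖v‖⁻¹) ^ 2 * q v := by
      exact dot_scale (J + Jᵀ) (‖v‖⁻¹) v
    have h2 : (‖v‖⁻¹) ^ 2 * q v ≤ q v0 := hscale ▸ hle
    have hpos : (0:ℝ) < ‖v‖ ^ 2 := by positivity
    calc q v = ‖v‖ ^ 2 * ((‖v‖⁻¹) ^ 2 * q v) := by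
            field_simp
      _ ≤ ‖v‖ ^ 2 * q v0 := mul_le_mul_of_nonneg_left h2 (le_of_lt hpos)
      _ = -(-q v0) * ‖v‖ ^ 2 := by ring

noncomputable def u (J : Matrix (Fin n) (Fin n) ℝ) (x : Fin n → ℝ) (t : ℝ) :
    EuclideanSpace ℝ (Fin n) := mvCLM x (E J t)

lemma hasDerivAt_u (J : Matrix (Fin n) (Fin n) ℝ) (x : Fin n → ℝ) (t : ℝ) :
    HasDerivAt (u J x) (mvCLM x (J * E J t)) t :=
  (mvCLM x).hasFDerivAt.comp_hasDerivAt t (hasDerivAt_E J t)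

lemma u_zero (J : Matrix (Fin n) (Fin n) ℝ) (x : Fin n → ℝ) (k : Fin n) :
    u J x 0 k = x k := by
  rw [u, mvCLM_apply, E_zero, Matrix.one_mulVec]

/-- exponential decay of the squared norm -/
lemma norm_sq_decay (J : Matrix (Fin n) (Fin n) ℝ) {c : ℝ} (hc : 0 < c)
    (hb : ∀ v : EuclideanSpace ℝ (Fin n), v ⬝ᵥ (J + Jᵀ).mulVec v ≤ -c * ‖v‖ ^ 2)
    (x : Fin n → ℝ) {t : ℝ} (ht : 0 ≤ t) :
    ‖u J x t‖ ^ 2 ≤ Real.exp (-c * t) * ‖u J x 0‖ ^ 2 := by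
  set g : ℝ → ℝ := fun s => ⟪u J x s, u J x s⟫ with hgdef
  have hgd : ∀ s : ℝ, HasDerivAt g
      (⟪u J x s, mvCLM x (J * E J s)⟫ + ⟪mvCLM x (J * E J s), u J x s⟫) s := by
    intro s
    exact (hasDerivAt_u J x s).inner ℝ (hasDerivAt_u J x s)
  have hg_le : ∀ s : ℝ,
      ⟪u J x s, mvCLM x (J * E J s)⟫ + ⟪mvCLM x (J * E J s), u J x s⟫ ≤ -c * g s := by
    intro s
    set w : Fin n → ℝ := (E J s).mulVec x with hw
    have hufn : ∀ k, u J x s k = w k := fun k => by rw [u, mvCLM_apply]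
    have hdfn : ∀ k, mvCLM x (J * E J s) k = J.mulVec w k := fun k => by
      rw [mvCLM_apply, ← Matrix.mulVec_mulVec]
    have hufn' : (u J x s : Fin n → ℝ) = w := funext hufn
    have hdfn' : (mvCLM x (J * E J s) : Fin n → ℝ) = J.mulVec w := funext hdfn
    have h1 : ⟪u J x s, mvCLM x (J * E J s)⟫ = w ⬝ᵥ J.mulVec w := by
      rw [inner_eq_dot, hufn', hdfn']
    have h2 : ⟪mvCLM x (J * E J s), u J x s⟫ = J.mulVec w ⬝ᵥ w := by
      rw [inner_eq_dot, hufn', hdfn']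
    have hq : (u J x s : Fin n → ℝ) ⬝ᵥ (J + Jᵀ).mulVec (u J x s)
        = w ⬝ᵥ J.mulVec w + J.mulVec w ⬝ᵥ w := by
      rw [hufn']
      rw [Matrix.add_mulVec, dotProduct_add]
      rw [Matrix.dotProduct_mulVec w Jᵀ w, Matrix.vecMul_transpose]
    have hgv : g s = ‖u J x s‖ ^ 2 := real_inner_self_eq_norm_sq _
    rw [h1, h2, ← hq, hgv]
    exact hb (u J x s)
  set h : ℝ → ℝ := fun s => Real.exp (c * s) * g s with hhdef
  have hhd : ∀ s : ℝ, HasDerivAt h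
      (Real.exp (c * s) * c * g s +
        Real.exp (c * s) *
          (⟪u J x s, mvCLM x (J * E J s)⟫ + ⟪mvCLM x (J * E J s), u J x s⟫)) s := by
    intro s
    have he : HasDerivAt (fun s : ℝ => Real.exp (c * s)) (Real.exp (c * s) * c) s := by
      simpa using ((hasDerivAt_id s).const_mul c).exp
    exact he.mul (hgd s)
  have hanti : AntitoneOn h (Set.Ici (0:ℝ)) := by
    apply antitoneOn_of_deriv_nonpos (convex_Ici 0)
    · exact fun s _ => (hhd s).continuousAt.continuousWithinAt
    · exact fun s _ => (hhd s).differentiableAt.differentiableWithinAt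
    · intro s _
      rw [(hhd s).deriv]
      have hgs : (0:ℝ) ≤ g s := by
        rw [hgdef]; exact real_inner_self_nonneg
      have hexp : (0:ℝ) ≤ Real.exp (c * s) := (Real.exp_pos _).le
      nlinarith [hg_le s]
  have hle : h t ≤ h 0 := hanti Set.self_mem_Ici ht ht
  have hg0 : g 0 = ‖u J x 0‖ ^ 2 := real_inner_self_eq_norm_sq _
  have hgt : g t = ‖u J x t‖ ^ 2 := real_inner_self_eq_norm_sq _
  have hkey : Real.exp (c * t) * ‖u J x t‖ ^ 2 ≤ ‖u J x 0‖ ^ 2 := by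
    have hh0 : h 0 = ‖u J x 0‖ ^ 2 := by
      show Real.exp (c * 0) * g 0 = _
      rw [hg0]; simp
    have hht : h t = Real.exp (c * t) * ‖u J x t‖ ^ 2 := by
      show Real.exp (c * t) * g t = _
      rw [hgt]
    rw [← hht, ← hh0]; exact hle
  have hexp_pos : (0:ℝ) < Real.exp (c * t) := Real.exp_pos _
  rw [neg_mul, Real.exp_neg, inv_mul_eq_div, le_div_iff₀ hexp_pos]
  nlinarith [hkey]

lemma E_transpose (J : Matrix (Fin n) (Fin n) ℝ) (t : ℝ) : E Jᵀ t = (E J t)ᵀ := by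
  rw [E, E, ← Matrix.transpose_smul, Matrix.exp_transpose]

lemma u_single_apply (J : Matrix (Fin n) (Fin n) ℝ) (i : Fin n) (t : ℝ) (k : Fin n) :
    u J (Pi.single i 1) t k = E J t k i := by
  rw [u, mvCLM_apply]
  simp [Matrix.mulVec, dotProduct, Pi.single_apply]

lemma F_entry (J : Matrix (Fin n) (Fin n) ℝ) (i j : Fin n) (t : ℝ) :
    (E Jᵀ t * E J t) i j = ⟪u J (Pi.single i 1) t, u J (Pi.single j 1) t⟫ := by
  rw [inner_eq_dot, E_transpose, Matrix.mul_apply]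
  have h1 : (u J (Pi.single i 1) t : Fin n → ℝ) = fun k => E J t k i :=
    funext (u_single_apply J i t)
  have h2 : (u J (Pi.single j 1) t : Fin n → ℝ) = fun k => E J t k j :=
    funext (u_single_apply J j t)
  rw [h1, h2]
  simp [dotProduct, Matrix.transpose_apply]

lemma norm_u_single_zero (J : Matrix (Fin n) (Fin n) ℝ) (i : Fin n) :
    ‖u J (Pi.single i 1) 0‖ ^ 2 = 1 := by
  rw [← real_inner_self_eq_norm_sq, inner_eq_dot]
  have h1 : (u J (Pi.single i 1) 0 : Fin n → ℝ) = Pi.single i 1 :=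
    funext (u_zero J (Pi.single i 1))
  rw [h1]
  simp [dotProduct, Pi.single_apply]

lemma norm_u_single_le (J : Matrix (Fin n) (Fin n) ℝ) {c : ℝ} (hc : 0 < c)
    (hb : ∀ v : EuclideanSpace ℝ (Fin n), v ⬝ᵥ (J + Jᵀ).mulVec v ≤ -c * ‖v‖ ^ 2)
    (i : Fin n) {t : ℝ} (ht : 0 ≤ t) :
    ‖u J (Pi.single i 1) t‖ ≤ Real.sqrt (Real.exp (-c * t)) := by
  have h := norm_sq_decay J hc hb (Pi.single i 1) ht
  rw [norm_u_single_zero, mul_one] at h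
  calc ‖u J (Pi.single i 1) t‖ = Real.sqrt (‖u J (Pi.single i 1) t‖ ^ 2) :=
        (Real.sqrt_sq (norm_nonneg _)).symm
    _ ≤ Real.sqrt (Real.exp (-c * t)) := Real.sqrt_le_sqrt h

lemma F_entry_bound (J : Matrix (Fin n) (Fin n) ℝ) {c : ℝ} (hc : 0 < c)
    (hb : ∀ v : EuclideanSpace ℝ (Fin n), v ⬝ᵥ (J + Jᵀ).mulVec v ≤ -c * ‖v‖ ^ 2)
    (i j : Fin n) {t : ℝ} (ht : 0 ≤ t) :
    |(E Jᵀ t * E J t) i j| ≤ Real.exp (-c * t) := by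
  rw [F_entry]
  calc |⟪u J (Pi.single i 1) t, u J (Pi.single j 1) t⟫|
      ≤ ‖u J (Pi.single i 1) t‖ * ‖u J (Pi.single j 1) t‖ := abs_real_inner_le_norm _ _
    _ ≤ Real.sqrt (Real.exp (-c * t)) * Real.sqrt (Real.exp (-c * t)) :=
        mul_le_mul (norm_u_single_le J hc hb i ht) (norm_u_single_le J hc hb j ht)
          (norm_nonneg _) (Real.sqrt_nonneg _)
    _ = Real.exp (-c * t) := Real.mul_self_sqrt (Real.exp_pos _).le

lemma continuous_E (J : Matrix (Fin n) (Fin n) ℝ) : Continuous (E J) :=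
  continuous_iff_continuousAt.2 fun t => (hasDerivAt_E J t).continuousAt

lemma continuous_F_entry (J : Matrix (Fin n) (Fin n) ℝ) (i j : Fin n) :
    Continuous fun t => (E Jᵀ t * E J t) i j := by
  have : Continuous fun t => E Jᵀ t * E J t := (continuous_E Jᵀ).mul (continuous_E J)
  have h2 := (entryCLM i j).continuous.comp this
  exact h2

lemma hF_int (J : Matrix (Fin n) (Fin n) ℝ) {c : ℝ} (hc : 0 < c)
    (hb : ∀ v : EuclideanSpace ℝ (Fin n), v ⬝ᵥ (J + Jᵀ).mulVec v ≤ -c * ‖v‖ ^ 2)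
    (i j : Fin n) :
    IntegrableOn (fun t : ℝ => (E Jᵀ t * E J t) i j) (Set.Ioi 0) := by
  apply (exp_neg_integrableOn_Ioi 0 hc).mono'
    ((continuous_F_entry J i j).aestronglyMeasurable.restrict)
  refine (ae_restrict_iff' measurableSet_Ioi).2 (ae_of_all _ fun t ht => ?_)
  rw [Real.norm_eq_abs]
  exact F_entry_bound J hc hb i j (le_of_lt ht)

lemma tendsto_F_entry (J : Matrix (Fin n) (Fin n) ℝ) {c : ℝ} (hc : 0 < c)
    (hb : ∀ v : EuclideanSpace ℝ (Fin n), v ⬝ᵥ (J + Jᵀ).mulVec v ≤ -c * ‖v‖ ^ 2)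
    (i j : Fin n) :
    Filter.Tendsto (fun t => (E Jᵀ t * E J t) i j) Filter.atTop (nhds 0) := by
  apply squeeze_zero_norm' (a := fun t => Real.exp (-c * t))
  · filter_upwards [Filter.eventually_ge_atTop (0:ℝ)] with t ht
    rw [Real.norm_eq_abs]
    exact F_entry_bound J hc hb i j ht
  · have h1 : Filter.Tendsto (fun t : ℝ => c * t) Filter.atTop Filter.atTop :=
      Filter.Tendsto.const_mul_atTop hc Filter.tendsto_id
    have := Real.tendsto_exp_neg_atTop_nhds_zero.comp h1
    refine this.congr fun t => ?_
    simp [Function.comp, neg_mul]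

lemma hasDerivAt_F (J : Matrix (Fin n) (Fin n) ℝ) (t : ℝ) :
    HasDerivAt (fun s => E Jᵀ s * E J s)
      (Jᵀ * (E Jᵀ t * E J t) + (E Jᵀ t * E J t) * J) t := by
  have h1 : HasDerivAt (E Jᵀ) (Jᵀ * E Jᵀ t) t := hasDerivAt_exp_smul_const' Jᵀ t
  have h2 : HasDerivAt (E J) (E J t * J) t := hasDerivAt_exp_smul_const J t
  have h := h1.mul h2
  exact h.congr_deriv (by simp only [mul_assoc])

lemma hasDerivAt_F_entry (J : Matrix (Fin n) (Fin n) ℝ) (i j : Fin n) (t : ℝ) :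
    HasDerivAt (fun s => (E Jᵀ s * E J s) i j)
      ((Jᵀ * (E Jᵀ t * E J t) + (E Jᵀ t * E J t) * J) i j) t := by
  have h := (entryCLM i j).hasFDerivAt.comp_hasDerivAt t (hasDerivAt_F J t)
  exact h

lemma int_left (J : Matrix (Fin n) (Fin n) ℝ) {c : ℝ} (hc : 0 < c)
    (hb : ∀ v : EuclideanSpace ℝ (Fin n), v ⬝ᵥ (J + Jᵀ).mulVec v ≤ -c * ‖v‖ ^ 2)
    (i j : Fin n) :
    IntegrableOn (fun t : ℝ => (Jᵀ * (E Jᵀ t * E J t)) i j) (Set.Ioi 0) := by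
  have h : IntegrableOn (fun t : ℝ => ∑ k, Jᵀ i k * (E Jᵀ t * E J t) k j) (Set.Ioi 0) :=
    integrable_finset_sum _ fun k _ => (hF_int J hc hb k j).const_mul _
  simpa [Matrix.mul_apply] using h

lemma int_right (J : Matrix (Fin n) (Fin n) ℝ) {c : ℝ} (hc : 0 < c)
    (hb : ∀ v : EuclideanSpace ℝ (Fin n), v ⬝ᵥ (J + Jᵀ).mulVec v ≤ -c * ‖v‖ ^ 2)
    (i j : Fin n) :
    IntegrableOn (fun t : ℝ => ((E Jᵀ t * E J t) * J) i j) (Set.Ioi 0) := by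
  have h : IntegrableOn (fun t : ℝ => ∑ k, (E Jᵀ t * E J t) i k * J k j) (Set.Ioi 0) :=
    integrable_finset_sum _ fun k _ => (hF_int J hc hb i k).mul_const _
  simpa [Matrix.mul_apply] using h

lemma FTC (J : Matrix (Fin n) (Fin n) ℝ) {c : ℝ} (hc : 0 < c)
    (hb : ∀ v : EuclideanSpace ℝ (Fin n), v ⬝ᵥ (J + Jᵀ).mulVec v ≤ -c * ‖v‖ ^ 2)
    (i j : Fin n) :
    (∫ t in Set.Ioi (0:ℝ), ((Jᵀ * (E Jᵀ t * E J t)) i j + ((E Jᵀ t * E J t) * J) i j))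
      = (-1 : Matrix (Fin n) (Fin n) ℝ) i j := by
  have hint : IntegrableOn
      (fun t : ℝ => (Jᵀ * (E Jᵀ t * E J t) + (E Jᵀ t * E J t) * J) i j) (Set.Ioi 0) := by
    have := (int_left J hc hb i j).add (int_right J hc hb i j)
    exact this
  have h := integral_Ioi_of_hasDerivAt_of_tendsto'
    (f := fun s => (E Jᵀ s * E J s) i j)
    (f' := fun t => (Jᵀ * (E Jᵀ t * E J t) + (E Jᵀ t * E J t) * J) i j)
    (fun t _ => hasDerivAt_F_entry J i j t) hint (tendsto_F_entry J hc hb i j)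
  have hF0 : (E Jᵀ 0 * E J 0) i j = (1 : Matrix (Fin n) (Fin n) ℝ) i j := by
    rw [E_zero, E_zero, one_mul]
  have h2 : (∫ t in Set.Ioi (0:ℝ), (Jᵀ * (E Jᵀ t * E J t) + E Jᵀ t * E J t * J) i j)
      = 0 - (E Jᵀ 0 * E J 0) i j := h
  rw [hF0] at h2
  have : (∫ t in Set.Ioi (0:ℝ),
      ((Jᵀ * (E Jᵀ t * E J t)) i j + ((E Jᵀ t * E J t) * J) i j))
      = ∫ t in Set.Ioi (0:ℝ), (Jᵀ * (E Jᵀ t * E J t) + (E Jᵀ t * E J t) * J) i j := rfl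
  rw [this, h2]
  simp [Matrix.neg_apply]

end LyapunovAux

/-- convergence (entrywise) of `∫₀^∞ exp(Jᵀ t) exp(J t) dt` and the
Lyapunov equation, when `J + Jᵀ` is negative definite. -/
theorem stmt1 {n : ℕ} (J : Matrix (Fin n) (Fin n) ℝ)
    (hneg : ∀ x : EuclideanSpace ℝ (Fin n), x ≠ 0 → x ⬝ᵥ (J + Jᵀ).mulVec x < 0) :
    ∃ P : Matrix (Fin n) (Fin n) ℝ,
      (∀ i j, IntegrableOn
          (fun t : ℝ => (NormedSpace.exp (t • Jᵀ) * NormedSpace.exp (t • J)) i j)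
          (Set.Ioi 0)) ∧
      (∀ i j, P i j =
          ∫ t in Set.Ioi (0 : ℝ),
            (NormedSpace.exp (t • Jᵀ) * NormedSpace.exp (t • J)) i j) ∧
      P * J + Jᵀ * P = -1 := by
  rcases Nat.eq_zero_or_pos n with h0 | hn
  · subst h0
    refine ⟨0, fun i => i.elim0, fun i => i.elim0, ?_⟩
    ext i j
    exact i.elim0
  · obtain ⟨c, hc, hb⟩ := LyapunovAux.exists_c J hn hneg
    set P : Matrix (Fin n) (Fin n) ℝ :=
      Matrix.of fun i j => ∫ t in Set.Ioi (0:ℝ),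
        (LyapunovAux.E Jᵀ t * LyapunovAux.E J t) i j with hP
    refine ⟨P, fun i j => LyapunovAux.hF_int J hc hb i j, fun i j => rfl, ?_⟩
    have key : ∀ i j, (P * J + Jᵀ * P) i j = (-1 : Matrix (Fin n) (Fin n) ℝ) i j := by
      intro i j
      have hPJ : (P * J) i j
          = ∫ t in Set.Ioi (0:ℝ), ((LyapunovAux.E Jᵀ t * LyapunovAux.E J t) * J) i j := by
        rw [Matrix.mul_apply]
        have hterm : ∀ k, P i k * J k j
            = ∫ t in Set.Ioi (0:ℝ), (LyapunovAux.E Jᵀ t * LyapunovAux.E J t) i k * J k j := by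
          intro k
          have hPik : P i k
              = ∫ t in Set.Ioi (0:ℝ), (LyapunovAux.E Jᵀ t * LyapunovAux.E J t) i k := rfl
          rw [hPik]
          exact (integral_mul_const _ _).symm
        rw [Finset.sum_congr rfl fun k _ => hterm k]
        rw [← integral_finset_sum _ fun k _ =>
          (LyapunovAux.hF_int J hc hb i k).mul_const (J k j)]
        congr 1
      have hJP : (Jᵀ * P) i j
          = ∫ t in Set.Ioi (0:ℝ), (Jᵀ * (LyapunovAux.E Jᵀ t * LyapunovAux.E J t)) i j := by
        rw [Matrix.mul_apply]
        have hterm : ∀ k, Jᵀ i k * P k j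
            = ∫ t in Set.Ioi (0:ℝ), Jᵀ i k * (LyapunovAux.E Jᵀ t * LyapunovAux.E J t) k j := by
          intro k
          have hPkj : P k j
              = ∫ t in Set.Ioi (0:ℝ), (LyapunovAux.E Jᵀ t * LyapunovAux.E J t) k j := rfl
          rw [hPkj]
          exact (integral_const_mul _ _).symm
        rw [Finset.sum_congr rfl fun k _ => hterm k]
        rw [← integral_finset_sum _ fun k _ =>
          (LyapunovAux.hF_int J hc hb k j).const_mul (Jᵀ i k)]
        congr 1
      rw [Matrix.add_apply, hPJ, hJP]
      rw [← integral_add (LyapunovAux.int_right J hc hb i j) (LyapunovAux.int_left J hc hb i j)]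
      rw [← LyapunovAux.FTC J hc hb i j]
      congr 1
      funext t
      ring
    exact Matrix.ext key
end

section
/- Let u : [t₀, ∞) → ℝⁿ be differentiable with u̇(t) = η G(u(t)) where ‖G(u) - F(u)‖ ≤ ε uniformly, F(u*) = 0, F(u) = J(u-u*) + g(u) with ‖g(u)‖ ≤ L‖u-u*‖² on the ball B(u*, r), J + Jᵀ ⪯ -2e₁ I, J + Jᵀ ⪰ -2e₂ I for 0 < e₁ ≤ e₂, and P solves PJ + JᵀP = -I. Then for V₁(t) = (u(t)-u*)ᵀP(u(t)-u*), whenever ‖u(t)-u*‖ < r: V₁'(t) ≤ -η‖u(t)-u*‖² + (ηL/e₁)‖u(t)-u*‖³ + (η/e₁) ε ‖u(t)-u*‖. -/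
open scoped RealInnerProductSpace

/-- Any self-adjoint `S` satisfying the symmetrized Lyapunov identity with a matrix `J`
whose symmetric part is `≤ -e₁` has operator bound `1/(2 e₁)` on its bilinear form. -/
lemma key_bound {n : ℕ} (S J : EuclideanSpace ℝ (Fin n) →L[ℝ] EuclideanSpace ℝ (Fin n))
    (hS : IsSelfAdjoint S) {e₁ : ℝ} (he₁ : 0 < e₁)
    (hJ1 : ∀ x, ⟪x, J x⟫ ≤ -e₁ * ‖x‖ ^ 2)
    (hSJ : ∀ v, ⟪S v, J v⟫ + ⟪J v, S v⟫ = -‖v‖ ^ 2)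
    (x w : EuclideanSpace ℝ (Fin n)) :
    ⟪x, S w⟫ ≤ 1 / (2 * e₁) * (‖x‖ * ‖w‖) := by
  have hsym := hS.isSymmetric
  have hn : Module.finrank ℝ (EuclideanSpace ℝ (Fin n)) = n := finrank_euclideanSpace_fin
  set b := hsym.eigenvectorBasis hn with hbdef
  set μ := hsym.eigenvalues hn with hμdef
  have hb : ∀ i, S (b i) = μ i • b i := by
    intro i
    have h := hsym.apply_eigenvectorBasis hn i
    simpa only [ContinuousLinearMap.coe_coe, RCLike.ofReal_real_eq_id, id] using h
  have hnorm : ∀ i, ‖b i‖ = 1 := fun i => b.orthonormal.1 i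
  have hμb : ∀ i, 0 ≤ μ i ∧ μ i ≤ 1 / (2 * e₁) := by
    intro i
    have h1 := hSJ (b i)
    rw [hb i, real_inner_smul_left, real_inner_smul_right, hnorm i, one_pow] at h1
    have h2 := hJ1 (b i)
    rw [hnorm i, one_pow, mul_one] at h2
    set c := ⟪b i, J (b i)⟫ with hc
    have hcomm : ⟪J (b i), b i⟫ = c := by rw [hc]; exact real_inner_comm _ _
    have h1' : μ i * c + μ i * c = -1 := by rw [hcomm] at h1; exact h1
    have hc0 : c < 0 := lt_of_le_of_lt h2 (by linarith)
    have hcne : -2 * c ≠ 0 := by intro h; nlinarith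
    have hμeq : μ i = 1 / (-2 * c) := by
      rw [eq_div_iff hcne]
      linear_combination (-1 : ℝ) * h1'
    constructor
    · rw [hμeq]
      exact le_of_lt (one_div_pos.mpr (by linarith))
    · rw [hμeq]
      exact one_div_le_one_div_of_le (by linarith) (by linarith)
  have hexp : ⟪x, S w⟫ = ∑ i, μ i * (⟪x, b i⟫ * ⟪b i, w⟫) := by
    rw [← b.sum_inner_mul_inner x (S w)]
    refine Finset.sum_congr rfl fun i _ => ?_
    have h := hsym (b i) w
    simp only [ContinuousLinearMap.coe_coe] at h
    rw [← h, hb i, real_inner_smul_left]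
    ring
  have habs : ∀ i, μ i * (⟪x, b i⟫ * ⟪b i, w⟫) ≤
      1 / (2 * e₁) * (|⟪x, b i⟫| * |⟪b i, w⟫|) := by
    intro i
    have h1 := (hμb i).1
    have h2 := (hμb i).2
    have h3 : ⟪x, b i⟫ * ⟪b i, w⟫ ≤ |⟪x, b i⟫| * |⟪b i, w⟫| := by
      calc ⟪x, b i⟫ * ⟪b i, w⟫ ≤ |⟪x, b i⟫ * ⟪b i, w⟫| := le_abs_self _
        _ = |⟪x, b i⟫| * |⟪b i, w⟫| := abs_mul _ _
    have h4 : 0 ≤ |⟪x, b i⟫| * |⟪b i, w⟫| := by positivity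
    nlinarith
  have hxsum : ∑ i, |⟪x, b i⟫| ^ 2 = ‖x‖ ^ 2 := by
    have := b.sum_inner_mul_inner x x
    rw [real_inner_self_eq_norm_sq] at this
    rw [← this]
    refine Finset.sum_congr rfl fun i _ => ?_
    rw [sq_abs, real_inner_comm (b i) x]
    ring
  have hwsum : ∑ i, |⟪b i, w⟫| ^ 2 = ‖w‖ ^ 2 := by
    have := b.sum_inner_mul_inner w w
    rw [real_inner_self_eq_norm_sq] at this
    rw [← this]
    refine Finset.sum_congr rfl fun i _ => ?_
    rw [sq_abs, real_inner_comm (b i) w]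
    ring
  have hCS : ∑ i, |⟪x, b i⟫| * |⟪b i, w⟫| ≤ ‖x‖ * ‖w‖ := by
    have h1 := Finset.sum_mul_sq_le_sq_mul_sq Finset.univ
      (fun i => |⟪x, b i⟫|) (fun i => |⟪b i, w⟫|)
    rw [hxsum, hwsum] at h1
    have h2 : 0 ≤ ∑ i, |⟪x, b i⟫| * |⟪b i, w⟫| :=
      Finset.sum_nonneg fun i _ => by positivity
    nlinarith [norm_nonneg x, norm_nonneg w, mul_nonneg (norm_nonneg x) (norm_nonneg w)]
  calc ⟪x, S w⟫ = ∑ i, μ i * (⟪x, b i⟫ * ⟪b i, w⟫) := hexp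
    _ ≤ ∑ i, 1 / (2 * e₁) * (|⟪x, b i⟫| * |⟪b i, w⟫|) :=
        Finset.sum_le_sum fun i _ => habs i
    _ = 1 / (2 * e₁) * ∑ i, |⟪x, b i⟫| * |⟪b i, w⟫| := by rw [Finset.mul_sum]
    _ ≤ 1 / (2 * e₁) * (‖x‖ * ‖w‖) := by
        have : (0:ℝ) < 2 * e₁ := by linarith
        exact mul_le_mul_of_nonneg_left hCS (by positivity)

/-- composite Lyapunov derivative bound along the perturbed flow
`u̇ = η G(u)`, combining the nominal quadratic decrease, the cubic Taylor
remainder, and the uniform perturbation term. -/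
theorem stmt16 {n : ℕ}
    (u : ℝ → EuclideanSpace ℝ (Fin n))
    (F G g : EuclideanSpace ℝ (Fin n) → EuclideanSpace ℝ (Fin n))
    (ustar : EuclideanSpace ℝ (Fin n))
    (J P : EuclideanSpace ℝ (Fin n) →L[ℝ] EuclideanSpace ℝ (Fin n))
    (t₀ η ε L r e₁ e₂ : ℝ)
    (hη : 0 < η) (hε : 0 ≤ ε) (hL : 0 < L) (hr : 0 < r) (he₁ : 0 < e₁)
    (hee : e₁ ≤ e₂)
    (hu : ∀ t, t₀ ≤ t → HasDerivAt u (η • G (u t)) t)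
    (hGF : ∀ x, ‖G x - F x‖ ≤ ε)
    (hF0 : F ustar = 0)
    (hFdecomp : ∀ x, F x = J (x - ustar) + g x)
    (hg : ∀ x, ‖x - ustar‖ < r → ‖g x‖ ≤ L * ‖x - ustar‖ ^ 2)
    (hJ1 : ∀ x, ⟪x, J x⟫ ≤ -e₁ * ‖x‖ ^ 2)
    (hJ2 : ∀ x, -e₂ * ‖x‖ ^ 2 ≤ ⟪x, J x⟫)
    (hLyap : P.comp J + (ContinuousLinearMap.adjoint J).comp P = -1) :
    ∀ t, t₀ ≤ t → ‖u t - ustar‖ < r →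
      ∃ D, HasDerivAt (fun τ => ⟪u τ - ustar, P (u τ - ustar)⟫) D t ∧
        D ≤ -η * ‖u t - ustar‖ ^ 2 + η * L / e₁ * ‖u t - ustar‖ ^ 3 +
            η / e₁ * ε * ‖u t - ustar‖ := by
  intro t ht htr
  set x := u t - ustar with hxdef
  -- derivative computation
  have hx : HasDerivAt (fun τ => u τ - ustar) (η • G (u t)) t := (hu t ht).sub_const ustar
  have hPx : HasDerivAt (fun τ => P (u τ - ustar)) (P (η • G (u t))) t :=
    P.hasFDerivAt.comp_hasDerivAt t hx
  have hD : HasDerivAt (fun τ => ⟪u τ - ustar, P (u τ - ustar)⟫)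
      (⟪x, P (η • G (u t))⟫ + ⟪η • G (u t), P x⟫) t := hx.inner ℝ hPx
  refine ⟨_, hD, ?_⟩
  -- decompose G(u t) = J x + w
  set w := G (u t) - J x with hwdef
  have hGu : G (u t) = J x + w := by rw [hwdef]; abel
  have hwbound : ‖w‖ ≤ ε + L * ‖x‖ ^ 2 := by
    have h1 : w = (G (u t) - F (u t)) + g (u t) := by
      rw [hwdef, hFdecomp (u t), ← hxdef]; abel
    calc ‖w‖ = ‖(G (u t) - F (u t)) + g (u t)‖ := by rw [h1]
      _ ≤ ‖G (u t) - F (u t)‖ + ‖g (u t)‖ := norm_add_le _ _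
      _ ≤ ε + L * ‖x‖ ^ 2 := add_le_add (hGF (u t)) (hg (u t) htr)
  -- symmetrized P
  set S : EuclideanSpace ℝ (Fin n) →L[ℝ] EuclideanSpace ℝ (Fin n) :=
    (1/2 : ℝ) • (P + ContinuousLinearMap.adjoint P) with hSdef
  have hSsa : IsSelfAdjoint S := by
    rw [hSdef, IsSelfAdjoint, star_smul, star_trivial,
      ContinuousLinearMap.star_eq_adjoint, map_add,
      ContinuousLinearMap.adjoint_adjoint, add_comm]
  have hPxy : ∀ a c : EuclideanSpace ℝ (Fin n), ⟪a, P c⟫ + ⟪c, P a⟫ = 2 * ⟪a, S c⟫ := by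
    intro a c
    have h1 : ⟪c, P a⟫ = ⟪a, ContinuousLinearMap.adjoint P c⟫ := by
      rw [ContinuousLinearMap.adjoint_inner_right, real_inner_comm]
    rw [h1]
    have : S c = (1/2 : ℝ) • (P c + ContinuousLinearMap.adjoint P c) := by
      rw [hSdef]; simp
    rw [this, real_inner_smul_right, inner_add_right]
    ring
  -- Lyapunov identity applied pointwise
  have hLpt : ∀ v : EuclideanSpace ℝ (Fin n), ⟪v, P (J v)⟫ + ⟪J v, P v⟫ = -‖v‖ ^ 2 := by
    intro v
    have h := congrArg (fun T : EuclideanSpace ℝ (Fin n) →L[ℝ] EuclideanSpace ℝ (Fin n) =>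
      ⟪v, T v⟫) hLyap
    simp only [ContinuousLinearMap.add_apply, ContinuousLinearMap.comp_apply,
      ContinuousLinearMap.neg_apply, ContinuousLinearMap.one_apply, inner_add_right,
      inner_neg_right] at h
    rw [ContinuousLinearMap.adjoint_inner_right, real_inner_self_eq_norm_sq] at h
    linarith [h]
  -- symmetrized Lyapunov identity for S
  have hSJ : ∀ v : EuclideanSpace ℝ (Fin n), ⟪S v, J v⟫ + ⟪J v, S v⟫ = -‖v‖ ^ 2 := by
    intro v
    have h1 := hPxy (J v) v
    -- ⟪J v, P v⟫ + ⟪v, P (J v)⟫ = 2 * ⟪J v, S v⟫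
    have h2 := hLpt v
    have h3 : ⟪S v, J v⟫ = ⟪J v, S v⟫ := real_inner_comm _ _
    rw [h3]
    linarith
  -- the quadratic term
  have hquad : ⟪x, P (J x)⟫ + ⟪J x, P x⟫ = -‖x‖ ^ 2 := hLpt x
  -- the perturbation term
  have hpert : ⟪x, P w⟫ + ⟪w, P x⟫ ≤ 1 / e₁ * (‖x‖ * ‖w‖) := by
    have h1 := hPxy x w
    have h2 := key_bound S J hSsa he₁ hJ1 hSJ x w
    calc ⟪x, P w⟫ + ⟪w, P x⟫ = 2 * ⟪x, S w⟫ := h1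
      _ ≤ 2 * (1 / (2 * e₁) * (‖x‖ * ‖w‖)) := by
          have := mul_le_mul_of_nonneg_left h2 (by norm_num : (0:ℝ) ≤ 2)
          linarith
      _ = 1 / e₁ * (‖x‖ * ‖w‖) := by field_simp
  -- assemble
  have hDval : ⟪x, P (η • G (u t))⟫ + ⟪η • G (u t), P x⟫ =
      η * ((⟪x, P (J x)⟫ + ⟪J x, P x⟫) + (⟪x, P w⟫ + ⟪w, P x⟫)) := by
    rw [hGu]
    simp only [smul_add, map_add, inner_add_right, inner_add_left, map_smul,
      real_inner_smul_right, real_inner_smul_left, inner_smul_left, inner_smul_right,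
      starRingEnd_apply, star_trivial]
    ring
  rw [hDval, hquad]
  have hxnn : (0:ℝ) ≤ ‖x‖ := norm_nonneg x
  have hmain : -‖x‖ ^ 2 + (⟪x, P w⟫ + ⟪w, P x⟫) ≤
      -‖x‖ ^ 2 + 1 / e₁ * (‖x‖ * (ε + L * ‖x‖ ^ 2)) := by
    have h1 : 1 / e₁ * (‖x‖ * ‖w‖) ≤ 1 / e₁ * (‖x‖ * (ε + L * ‖x‖ ^ 2)) := by
      apply mul_le_mul_of_nonneg_left _ (by positivity)
      exact mul_le_mul_of_nonneg_left hwbound hxnn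
    linarith [hpert]
  have hfinal : η * (-‖x‖ ^ 2 + (⟪x, P w⟫ + ⟪w, P x⟫)) ≤
      -η * ‖x‖ ^ 2 + η * L / e₁ * ‖x‖ ^ 3 + η / e₁ * ε * ‖x‖ := by
    have h2 := mul_le_mul_of_nonneg_left hmain (le_of_lt hη)
    have h3 : η * (-‖x‖ ^ 2 + 1 / e₁ * (‖x‖ * (ε + L * ‖x‖ ^ 2))) =
        -η * ‖x‖ ^ 2 + η * L / e₁ * ‖x‖ ^ 3 + η / e₁ * ε * ‖x‖ := by
      field_simp
      ring
    linarith
  exact hfinal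
end
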